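/- Let $n \ge 1$ and $y$ be integers with $0 \le y < n$, and let $p \in [0,1]$. Then the binomial cumulative distribution function satisfies $\sum_{k=0}^{y} \binom{n}{k} p^k (1-p)^{n-k} = (n-y)\binom{n}{y} \int_0^{1-p} t^{n-y-1}(1-t)^{y}\, dt$. -/

import Mathlib

open intervalIntegral

private lemma ibp_aux (a b : ℕ) (x : ℝ) :
    ((a : ℝ) + 1) * ∫ t in (0 : ℝ)..x, t ^ a * (1 - t) ^ (b + 1)
      = x ^ (a + 1) * (1 - x) ^ (b + 1)
        + ((b : ℝ) + 1) * ∫ t in (0 : ℝ)..x, t ^ (a + 1) * (1 - t) ^ b := by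
  have hderiv : ∀ t : ℝ, HasDerivAt (fun t : ℝ => t ^ (a + 1) * (1 - t) ^ (b + 1))
      (((a : ℝ) + 1) * (t ^ a * (1 - t) ^ (b + 1))
        - ((b : ℝ) + 1) * (t ^ (a + 1) * (1 - t) ^ b)) t := by
    intro t
    have h1 : HasDerivAt (fun t : ℝ => t ^ (a + 1)) (((a : ℝ) + 1) * t ^ a) t := by
      simpa using hasDerivAt_pow (a + 1) t
    have h2 : HasDerivAt (fun t : ℝ => (1 - t) ^ (b + 1)) (-(((b : ℝ) + 1) * (1 - t) ^ b)) t := by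
      have := ((hasDerivAt_id t).const_sub 1).pow (b + 1)
      simpa [Pi.pow_def] using this
    have := h1.fun_mul h2
    refine this.congr_deriv ?_
    push_cast
    ring
  have hcont : Continuous fun t : ℝ => ((a : ℝ) + 1) * (t ^ a * (1 - t) ^ (b + 1))
      - ((b : ℝ) + 1) * (t ^ (a + 1) * (1 - t) ^ b) := by continuity
  have hint := intervalIntegral.integral_eq_sub_of_hasDerivAt
    (fun t _ => hderiv t) (hcont.intervalIntegrable 0 x)
  have hi1 : IntervalIntegrable (fun t : ℝ => t ^ a * (1 - t) ^ (b + 1)) MeasureTheory.volume 0 x :=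
    (by continuity : Continuous fun t : ℝ => t ^ a * (1 - t) ^ (b + 1)).intervalIntegrable 0 x
  have hi2 : IntervalIntegrable (fun t : ℝ => t ^ (a + 1) * (1 - t) ^ b) MeasureTheory.volume 0 x :=
    (by continuity : Continuous fun t : ℝ => t ^ (a + 1) * (1 - t) ^ b).intervalIntegrable 0 x
  rw [intervalIntegral.integral_sub (hi1.const_mul _) (hi2.const_mul _),
    intervalIntegral.integral_const_mul, intervalIntegral.integral_const_mul] at hint
  simp at hint
  linarith [hint]

private lemma key (y : ℕ) : ∀ (m : ℕ) (p : ℝ),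
    ∑ k ∈ Finset.range (y + 1), ((y + 1 + m).choose k : ℝ) * p ^ k * (1 - p) ^ (y + 1 + m - k)
      = ((m : ℝ) + 1) * ((y + 1 + m).choose y : ℝ)
          * ∫ t in (0 : ℝ)..(1 - p), t ^ m * (1 - t) ^ y := by
  induction y with
  | zero =>
    intro m p
    simp [integral_pow, mul_div_cancel₀ _ (by positivity : ((m : ℝ) + 1) ≠ 0)]
    ring
  | succ y ih =>
    intro m p
    rw [Finset.sum_range_succ]
    have hn : y + 1 + 1 + m = y + 1 + (m + 1) := by ring
    have hIH := ih (m + 1) p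
    rw [hn] at *
    -- hIH sum matches our partial sum
    rw [hIH]
    have hibp := ibp_aux m y (1 - p)
    have hchoose : ((y + 1 + (m + 1)).choose (y + 1) : ℝ) * ((y : ℝ) + 1)
        = ((y + 1 + (m + 1)).choose y : ℝ) * ((m : ℝ) + 2) := by
      have := Nat.choose_succ_right_eq (y + 1 + (m + 1)) y
      have h2 : y + 1 + (m + 1) - y = m + 2 := by omega
      rw [h2] at this
      exact_mod_cast congrArg (Nat.cast : ℕ → ℝ) this
    have hsub : (1 : ℝ) - (1 - p) = p := by ring
    rw [hsub] at hibp
    have hexp : y + 1 + (m + 1) - (y + 1) = m + 1 := by omega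
    rw [hexp]
    push_cast at hIH ⊢
    linear_combination (-((y + 1 + (m + 1)).choose (y + 1) : ℝ)) * hibp
      - (∫ t in (0:ℝ)..(1-p), t ^ (m + 1) * (1 - t) ^ y) * hchoose

/-- Identity relating the binomial CDF and an incomplete Beta integral:
`∑_{k=0}^{y} C(n,k) pᵏ (1-p)^{n-k} = (n-y) C(n,y) ∫₀^{1-p} t^{n-y-1} (1-t)ʸ dt`. -/
theorem stmt_11 (n y : ℕ) (hn : 1 ≤ n) (hy : y < n) (p : ℝ) (hp : p ∈ Set.Icc (0 : ℝ) 1) :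
    ∑ k ∈ Finset.range (y + 1), (n.choose k : ℝ) * p ^ k * (1 - p) ^ (n - k)
      = ((n : ℝ) - y) * (n.choose y : ℝ)
          * ∫ t in (0 : ℝ)..(1 - p), t ^ (n - y - 1) * (1 - t) ^ y := by
  obtain ⟨m, rfl⟩ : ∃ m, n = y + 1 + m := ⟨n - y - 1, by omega⟩
  have h1 : y + 1 + m - y - 1 = m := by omega
  have h2 : ((y + 1 + m : ℕ) : ℝ) - y = (m : ℝ) + 1 := by push_cast; ring
  rw [h1, h2]
  exact key y m p
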